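/- Let f* be an optimal randomized prediction rule for the maximal-correlation-constrained fair classification problem: f* satisfies ρ_m(Ŷ, S) ≤ ε and its risk E[1{Ŷ ≠ Y}] is minimal among all randomized prediction rules Q_{Ŷ|X,S} satisfying ρ_m(Ŷ, S) ≤ ε. Suppose Y = h(X, S) for a deterministic function h : 𝒳 × 𝒮 → 𝒴, and s_max ∈ 𝒮 satisfies P_S(s_max) = 1/2 + δ for some δ > 0. Let r = min{|𝒮|, |𝒴|} − 1 and u(t) = max{t, √t}. Then for the prediction variable Ŷ induced by f*: E_{s∼P_S}[ TV(P_{Ŷ|S=s}, P_{Y|S=s_max}) ] ≤ (1/2 + 1/(4δ)) · u(rε). -/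

import Mathlib

open Finset

noncomputable section

variable {𝒳 𝒴 𝒮 : Type*} [Fintype 𝒳] [Fintype 𝒴] [Fintype 𝒮] [DecidableEq 𝒴]

/-- Total variation distance between two finitely supported distributions on `𝒴`,
`TV(p, q) = (1/2) ∑ y, |p y - q y|`. -/
def TV (p q : 𝒴 → ℝ) : ℝ := (1 / 2) * ∑ y, |p y - q y|

/-- Marginal distribution of the sensitive attribute `S` under the joint `P` of `(X, Y, S)`. -/
def margS (P : 𝒳 → 𝒴 → 𝒮 → ℝ) (s : 𝒮) : ℝ := ∑ x, ∑ y, P x y s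

/-- Conditional distribution of the label `Y` given `S = s`. -/
def condYS (P : 𝒳 → 𝒴 → 𝒮 → ℝ) (s : 𝒮) (y : 𝒴) : ℝ := (∑ x, P x y s) / margS P s

/-- A randomized prediction rule `Q`: for every `(x, s)`, `Q x s` is a probability
distribution on labels. -/
def IsRule (Q : 𝒳 → 𝒮 → 𝒴 → ℝ) : Prop :=
  (∀ x s y, 0 ≤ Q x s y) ∧ ∀ x s, ∑ y, Q x s y = 1

/-- The risk `E[1{Ŷ ≠ Y}]` of the rule `Q` under the joint distribution induced by `P` and
`Q` (in which `Ŷ` is conditionally independent of `Y` given `(X, S)`). -/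
def risk (P : 𝒳 → 𝒴 → 𝒮 → ℝ) (Q : 𝒳 → 𝒮 → 𝒴 → ℝ) : ℝ :=
  ∑ x, ∑ y, ∑ s, ∑ yh, P x y s * Q x s yh * (if yh = y then (0 : ℝ) else 1)

/-- Joint distribution of `(Ŷ, S)` induced by `P` and the rule `Q`. -/
def jointYhatS (P : 𝒳 → 𝒴 → 𝒮 → ℝ) (Q : 𝒳 → 𝒮 → 𝒴 → ℝ) (yh : 𝒴) (s : 𝒮) : ℝ :=
  ∑ x, ∑ y, P x y s * Q x s yh

/-- Marginal distribution of the prediction `Ŷ`. -/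
def margYhat (P : 𝒳 → 𝒴 → 𝒮 → ℝ) (Q : 𝒳 → 𝒮 → 𝒴 → ℝ) (yh : 𝒴) : ℝ :=
  ∑ s, jointYhatS P Q yh s

/-- Conditional distribution of the prediction `Ŷ` given `S = s`. -/
def condYhatS (P : 𝒳 → 𝒴 → 𝒮 → ℝ) (Q : 𝒳 → 𝒮 → 𝒴 → ℝ) (s : 𝒮) (yh : 𝒴) : ℝ :=
  jointYhatS P Q yh s / margS P s

/-- Hirschfeld–Gebelein–Rényi maximal correlation between the prediction `Ŷ` and `S`:
the supremum of `E[f(Ŷ) g(S)]` over `f, g` with zero mean and unit second moment. -/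
def maxCorr (P : 𝒳 → 𝒴 → 𝒮 → ℝ) (Q : 𝒳 → 𝒮 → 𝒴 → ℝ) : ℝ :=
  sSup { c : ℝ | ∃ f : 𝒴 → ℝ, ∃ g : 𝒮 → ℝ,
    (∑ yh, margYhat P Q yh * f yh = 0) ∧ (∑ s, margS P s * g s = 0) ∧
    (∑ yh, margYhat P Q yh * f yh ^ 2 = 1) ∧ (∑ s, margS P s * g s ^ 2 = 1) ∧
    c = ∑ yh, ∑ s, jointYhatS P Q yh s * f yh * g s }

set_option linter.unusedSectionVars false

lemma TV_nonneg (p q : 𝒴 → ℝ) : 0 ≤ TV p q := by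
  unfold TV
  have : (0:ℝ) ≤ ∑ y, |p y - q y| := Finset.sum_nonneg fun y _ => abs_nonneg _
  linarith

lemma TV_triangle (p q r : 𝒴 → ℝ) : TV p r ≤ TV p q + TV q r := by
  unfold TV
  rw [← mul_add, ← Finset.sum_add_distrib]
  have : ∑ y, |p y - r y| ≤ ∑ y, (|p y - q y| + |q y - r y|) :=
    Finset.sum_le_sum fun y _ => (abs_sub_le _ _ _)
  linarith

lemma TV_symm (p q : 𝒴 → ℝ) : TV p q = TV q p := by
  unfold TV; congr 1; exact Finset.sum_congr rfl fun y _ => abs_sub_comm _ _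

lemma TV_eq_one_sub (p q : 𝒴 → ℝ) (hp : ∑ y, p y = 1) (hq : ∑ y, q y = 1) :
    TV p q = 1 - ∑ y, min (p y) (q y) := by
  unfold TV
  have e : ∀ y : 𝒴, |p y - q y| = p y + q y - 2 * min (p y) (q y) := by
    intro y
    rcases le_total (p y) (q y) with hle | hle
    · rw [abs_of_nonpos (by linarith), min_eq_left hle]; ring
    · rw [abs_of_nonneg (by linarith), min_eq_right hle]; ring
  rw [Finset.sum_congr rfl fun y _ => e y]
  rw [Finset.sum_sub_distrib, Finset.sum_add_distrib, hp, hq, ← Finset.mul_sum]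
  ring

section Marg
variable (P : 𝒳 → 𝒴 → 𝒮 → ℝ) (Q : 𝒳 → 𝒮 → 𝒴 → ℝ)

lemma margS_nonneg (hP0 : ∀ x y s, 0 ≤ P x y s) (s : 𝒮) : 0 ≤ margS P s :=
  Finset.sum_nonneg fun x _ => Finset.sum_nonneg fun y _ => hP0 x y s

lemma margS_sum (hP1 : ∑ x, ∑ y, ∑ s, P x y s = 1) : ∑ s, margS P s = 1 := by
  unfold margS
  rw [Finset.sum_comm]
  rw [← hP1]
  exact Finset.sum_congr rfl fun x _ => Finset.sum_comm

lemma joint_nonneg (hP0 : ∀ x y s, 0 ≤ P x y s) (hQ : IsRule Q) (yh : 𝒴) (s : 𝒮) :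
    0 ≤ jointYhatS P Q yh s :=
  Finset.sum_nonneg fun x _ => Finset.sum_nonneg fun y _ =>
    mul_nonneg (hP0 x y s) (hQ.1 x s yh)

lemma joint_sum_yh (hQ : IsRule Q) (s : 𝒮) : ∑ yh, jointYhatS P Q yh s = margS P s := by
  unfold jointYhatS margS
  rw [Finset.sum_comm]
  refine Finset.sum_congr rfl fun x _ => ?_
  rw [Finset.sum_comm]
  refine Finset.sum_congr rfl fun y _ => ?_
  rw [← Finset.mul_sum, hQ.2 x s, mul_one]

lemma margYhat_nonneg (hP0 : ∀ x y s, 0 ≤ P x y s) (hQ : IsRule Q) (yh : 𝒴) :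
    0 ≤ margYhat P Q yh :=
  Finset.sum_nonneg fun s _ => joint_nonneg P Q hP0 hQ yh s

lemma margYhat_sum (hP1 : ∑ x, ∑ y, ∑ s, P x y s = 1) (hQ : IsRule Q) :
    ∑ yh, margYhat P Q yh = 1 := by
  unfold margYhat
  rw [Finset.sum_comm]
  rw [Finset.sum_congr rfl fun s _ => joint_sum_yh P Q hQ s]
  exact margS_sum P hP1

lemma joint_le_margYhat (hP0 : ∀ x y s, 0 ≤ P x y s) (hQ : IsRule Q) (yh : 𝒴) (s : 𝒮) :
    jointYhatS P Q yh s ≤ margYhat P Q yh :=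
  Finset.single_le_sum (fun s' _ => joint_nonneg P Q hP0 hQ yh s') (Finset.mem_univ s)

end Marg

section Corr
variable (P : 𝒳 → 𝒴 → 𝒮 → ℝ) (Q : 𝒳 → 𝒮 → 𝒴 → ℝ)

lemma corr_elem_le_one (hP0 : ∀ x y s, 0 ≤ P x y s)
    (hP1 : ∑ x, ∑ y, ∑ s, P x y s = 1) (hQ : IsRule Q) :
    ∀ c ∈ { c : ℝ | ∃ f : 𝒴 → ℝ, ∃ g : 𝒮 → ℝ,
      (∑ yh, margYhat P Q yh * f yh = 0) ∧ (∑ s, margS P s * g s = 0) ∧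
      (∑ yh, margYhat P Q yh * f yh ^ 2 = 1) ∧ (∑ s, margS P s * g s ^ 2 = 1) ∧
      c = ∑ yh, ∑ s, jointYhatS P Q yh s * f yh * g s }, c ≤ 1 := by
  rintro c ⟨f, g, h1, h2, h3, h4, rfl⟩
  have hprod : ∑ yh, ∑ s, jointYhatS P Q yh s * f yh * g s
      = ∑ p : 𝒴 × 𝒮, (Real.sqrt (jointYhatS P Q p.1 p.2) * f p.1)
          * (Real.sqrt (jointYhatS P Q p.1 p.2) * g p.2) := by
    rw [Fintype.sum_prod_type]
    refine Finset.sum_congr rfl fun yh _ => Finset.sum_congr rfl fun s _ => ?_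
    have : Real.sqrt (jointYhatS P Q yh s) * Real.sqrt (jointYhatS P Q yh s)
        = jointYhatS P Q yh s := Real.mul_self_sqrt (joint_nonneg P Q hP0 hQ yh s)
    calc jointYhatS P Q yh s * f yh * g s
        = (Real.sqrt (jointYhatS P Q yh s) * Real.sqrt (jointYhatS P Q yh s)) * f yh * g s := by
          rw [this]
      _ = (Real.sqrt (jointYhatS P Q yh s) * f yh)
          * (Real.sqrt (jointYhatS P Q yh s) * g s) := by ring
  have hf2 : ∑ p : 𝒴 × 𝒮, (Real.sqrt (jointYhatS P Q p.1 p.2) * f p.1) ^ 2 = 1 := by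
    rw [Fintype.sum_prod_type]
    have : ∀ yh : 𝒴, ∑ s, (Real.sqrt (jointYhatS P Q yh s) * f yh) ^ 2
        = margYhat P Q yh * f yh ^ 2 := by
      intro yh
      rw [margYhat, Finset.sum_mul]
      refine Finset.sum_congr rfl fun s _ => ?_
      rw [mul_pow, Real.sq_sqrt (joint_nonneg P Q hP0 hQ yh s)]
    rw [Finset.sum_congr rfl fun yh _ => this yh, h3]
  have hg2 : ∑ p : 𝒴 × 𝒮, (Real.sqrt (jointYhatS P Q p.1 p.2) * g p.2) ^ 2 = 1 := by
    rw [Fintype.sum_prod_type, Finset.sum_comm]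
    have : ∀ s : 𝒮, ∑ yh, (Real.sqrt (jointYhatS P Q yh s) * g s) ^ 2
        = margS P s * g s ^ 2 := by
      intro s
      rw [← joint_sum_yh P Q hQ s, Finset.sum_mul]
      refine Finset.sum_congr rfl fun yh _ => ?_
      rw [mul_pow, Real.sq_sqrt (joint_nonneg P Q hP0 hQ yh s)]
    rw [Finset.sum_congr rfl fun s _ => this s, h4]
  have cs := Finset.sum_mul_sq_le_sq_mul_sq Finset.univ
    (fun p : 𝒴 × 𝒮 => Real.sqrt (jointYhatS P Q p.1 p.2) * f p.1)
    (fun p : 𝒴 × 𝒮 => Real.sqrt (jointYhatS P Q p.1 p.2) * g p.2)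
  rw [hf2, hg2, hprod] at *
  nlinarith [cs]

lemma corr_bddAbove (hP0 : ∀ x y s, 0 ≤ P x y s)
    (hP1 : ∑ x, ∑ y, ∑ s, P x y s = 1) (hQ : IsRule Q) :
    BddAbove { c : ℝ | ∃ f : 𝒴 → ℝ, ∃ g : 𝒮 → ℝ,
      (∑ yh, margYhat P Q yh * f yh = 0) ∧ (∑ s, margS P s * g s = 0) ∧
      (∑ yh, margYhat P Q yh * f yh ^ 2 = 1) ∧ (∑ s, margS P s * g s ^ 2 = 1) ∧
      c = ∑ yh, ∑ s, jointYhatS P Q yh s * f yh * g s } :=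
  ⟨1, fun c hc => corr_elem_le_one P Q hP0 hP1 hQ c hc⟩

lemma maxCorr_nonneg (hP0 : ∀ x y s, 0 ≤ P x y s)
    (hP1 : ∑ x, ∑ y, ∑ s, P x y s = 1) (hQ : IsRule Q) :
    0 ≤ maxCorr P Q := by
  rcases Set.eq_empty_or_nonempty { c : ℝ | ∃ f : 𝒴 → ℝ, ∃ g : 𝒮 → ℝ,
      (∑ yh, margYhat P Q yh * f yh = 0) ∧ (∑ s, margS P s * g s = 0) ∧
      (∑ yh, margYhat P Q yh * f yh ^ 2 = 1) ∧ (∑ s, margS P s * g s ^ 2 = 1) ∧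
      c = ∑ yh, ∑ s, jointYhatS P Q yh s * f yh * g s } with he | hne
  · unfold maxCorr
    rw [he, Real.sSup_empty]
  · obtain ⟨c, f, g, h1, h2, h3, h4, h5⟩ := hne
    have hmem : c ∈ { c : ℝ | ∃ f : 𝒴 → ℝ, ∃ g : 𝒮 → ℝ,
      (∑ yh, margYhat P Q yh * f yh = 0) ∧ (∑ s, margS P s * g s = 0) ∧
      (∑ yh, margYhat P Q yh * f yh ^ 2 = 1) ∧ (∑ s, margS P s * g s ^ 2 = 1) ∧
      c = ∑ yh, ∑ s, jointYhatS P Q yh s * f yh * g s } := ⟨f, g, h1, h2, h3, h4, h5⟩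
    have hneg : -c ∈ { c : ℝ | ∃ f : 𝒴 → ℝ, ∃ g : 𝒮 → ℝ,
      (∑ yh, margYhat P Q yh * f yh = 0) ∧ (∑ s, margS P s * g s = 0) ∧
      (∑ yh, margYhat P Q yh * f yh ^ 2 = 1) ∧ (∑ s, margS P s * g s ^ 2 = 1) ∧
      c = ∑ yh, ∑ s, jointYhatS P Q yh s * f yh * g s } := by
      refine ⟨fun yh => -f yh, g, ?_, h2, ?_, h4, ?_⟩
      · rw [← neg_eq_zero, ← Finset.sum_neg_distrib]
        rw [← h1]
        exact Finset.sum_congr rfl fun yh _ => by ring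
      · rw [← h3]
        exact Finset.sum_congr rfl fun yh _ => by ring
      · rw [neg_eq_iff_eq_neg, h5, ← Finset.sum_neg_distrib]
        exact Finset.sum_congr rfl fun yh _ => by
          rw [← Finset.sum_neg_distrib]
          exact Finset.sum_congr rfl fun s _ => by ring
    have hb := corr_bddAbove P Q hP0 hP1 hQ
    have l1 := le_csSup hb hmem
    have l2 := le_csSup hb hneg
    unfold maxCorr
    linarith

lemma corr_pair_le (hP0 : ∀ x y s, 0 ≤ P x y s)
    (hP1 : ∑ x, ∑ y, ∑ s, P x y s = 1) (hQ : IsRule Q)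
    {ε : ℝ} (hfair : maxCorr P Q ≤ ε) (hε : 0 ≤ ε)
    (f : 𝒴 → ℝ) (g : 𝒮 → ℝ)
    (hf : ∑ yh, margYhat P Q yh * f yh = 0) (hg : ∑ s, margS P s * g s = 0) :
    ∑ yh, ∑ s, jointYhatS P Q yh s * f yh * g s
      ≤ ε * Real.sqrt (∑ yh, margYhat P Q yh * f yh ^ 2)
          * Real.sqrt (∑ s, margS P s * g s ^ 2) := by
  have hA0 : 0 ≤ ∑ yh, margYhat P Q yh * f yh ^ 2 :=
    Finset.sum_nonneg fun yh _ => mul_nonneg (margYhat_nonneg P Q hP0 hQ yh) (sq_nonneg _)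
  have hB0 : 0 ≤ ∑ s, margS P s * g s ^ 2 :=
    Finset.sum_nonneg fun s _ => mul_nonneg (margS_nonneg P hP0 s) (sq_nonneg _)
  by_cases ha : (∑ yh, margYhat P Q yh * f yh ^ 2) = 0
  · have hz : ∀ yh, margYhat P Q yh * f yh ^ 2 = 0 := by
      intro yh
      have := (Finset.sum_eq_zero_iff_of_nonneg (fun yh _ =>
        mul_nonneg (margYhat_nonneg P Q hP0 hQ yh) (sq_nonneg _))).1 ha
      exact this yh (Finset.mem_univ yh)
    have hterm : ∀ yh s, jointYhatS P Q yh s * f yh * g s = 0 := by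
      intro yh s
      rcases mul_eq_zero.1 (hz yh) with hm | hf0
      · have h1 : jointYhatS P Q yh s ≤ 0 := hm ▸ joint_le_margYhat P Q hP0 hQ yh s
        have h2 : jointYhatS P Q yh s = 0 := le_antisymm h1 (joint_nonneg P Q hP0 hQ yh s)
        rw [h2]; ring
      · have : f yh = 0 := sq_eq_zero_iff.1 hf0
        rw [this]; ring
    have hL : ∑ yh, ∑ s, jointYhatS P Q yh s * f yh * g s = 0 :=
      Finset.sum_eq_zero fun yh _ => Finset.sum_eq_zero fun s _ => hterm yh s
    rw [hL, ha, Real.sqrt_zero, mul_zero, zero_mul]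
  · by_cases hb : (∑ s, margS P s * g s ^ 2) = 0
    · have hz : ∀ s, margS P s * g s ^ 2 = 0 := by
        intro s
        have := (Finset.sum_eq_zero_iff_of_nonneg (fun s _ =>
          mul_nonneg (margS_nonneg P hP0 s) (sq_nonneg _))).1 hb
        exact this s (Finset.mem_univ s)
      have hterm : ∀ yh s, jointYhatS P Q yh s * f yh * g s = 0 := by
        intro yh s
        rcases mul_eq_zero.1 (hz s) with hm | hg0
        · have h1 : jointYhatS P Q yh s ≤ margS P s := by
            rw [← joint_sum_yh P Q hQ s]
            exact Finset.single_le_sum (fun yh' _ => joint_nonneg P Q hP0 hQ yh' s)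
              (Finset.mem_univ yh)
          have h2 : jointYhatS P Q yh s = 0 :=
            le_antisymm (hm ▸ h1) (joint_nonneg P Q hP0 hQ yh s)
          rw [h2]; ring
        · have : g s = 0 := sq_eq_zero_iff.1 hg0
          rw [this]; ring
      have hL : ∑ yh, ∑ s, jointYhatS P Q yh s * f yh * g s = 0 :=
        Finset.sum_eq_zero fun yh _ => Finset.sum_eq_zero fun s _ => hterm yh s
      rw [hL, hb, Real.sqrt_zero, mul_zero]
    · -- main case A, B > 0
      set A := Real.sqrt (∑ yh, margYhat P Q yh * f yh ^ 2) with hAdef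
      set B := Real.sqrt (∑ s, margS P s * g s ^ 2) with hBdef
      have hA2 : A ^ 2 = ∑ yh, margYhat P Q yh * f yh ^ 2 := Real.sq_sqrt hA0
      have hB2 : B ^ 2 = ∑ s, margS P s * g s ^ 2 := Real.sq_sqrt hB0
      have hA : 0 < A := Real.sqrt_pos.2 (lt_of_le_of_ne hA0 (Ne.symm ha))
      have hB : 0 < B := Real.sqrt_pos.2 (lt_of_le_of_ne hB0 (Ne.symm hb))

      have hABpos : 0 < A * B := mul_pos hA hB
      set c : ℝ := (∑ yh, ∑ s, jointYhatS P Q yh s * f yh * g s) / (A * B) with hcdef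
      have hmem : c ∈ { c : ℝ | ∃ f : 𝒴 → ℝ, ∃ g : 𝒮 → ℝ,
          (∑ yh, margYhat P Q yh * f yh = 0) ∧ (∑ s, margS P s * g s = 0) ∧
          (∑ yh, margYhat P Q yh * f yh ^ 2 = 1) ∧ (∑ s, margS P s * g s ^ 2 = 1) ∧
          c = ∑ yh, ∑ s, jointYhatS P Q yh s * f yh * g s } := by
        refine ⟨fun yh => f yh / A, fun s => g s / B, ?_, ?_, ?_, ?_, ?_⟩
        · have : ∑ yh, margYhat P Q yh * (f yh / A) =
              (∑ yh, margYhat P Q yh * f yh) / A := by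
            rw [Finset.sum_div]
            exact Finset.sum_congr rfl fun yh _ => by ring
          rw [this, hf, zero_div]
        · have : ∑ s, margS P s * (g s / B) = (∑ s, margS P s * g s) / B := by
            rw [Finset.sum_div]
            exact Finset.sum_congr rfl fun s _ => by ring
          rw [this, hg, zero_div]
        · have : ∑ yh, margYhat P Q yh * (f yh / A) ^ 2 =
              (∑ yh, margYhat P Q yh * f yh ^ 2) / A ^ 2 := by
            rw [Finset.sum_div]
            exact Finset.sum_congr rfl fun yh _ => by ring
          rw [this, ← hA2, div_self (by positivity)]
        · have : ∑ s, margS P s * (g s / B) ^ 2 =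
              (∑ s, margS P s * g s ^ 2) / B ^ 2 := by
            rw [Finset.sum_div]
            exact Finset.sum_congr rfl fun s _ => by ring
          rw [this, ← hB2, div_self (by positivity)]
        · rw [hcdef]
          rw [Finset.sum_div]
          refine Finset.sum_congr rfl fun yh _ => ?_
          rw [Finset.sum_div]
          refine Finset.sum_congr rfl fun s _ => ?_
          field_simp
          try ring
      have hcle : c ≤ ε :=
        le_trans (le_csSup (corr_bddAbove P Q hP0 hP1 hQ) hmem) hfair
      have : ∑ yh, ∑ s, jointYhatS P Q yh s * f yh * g s = c * (A * B) := by
        rw [hcdef]; field_simp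
      rw [this, mul_assoc]
      exact mul_le_mul_of_nonneg_right hcle (le_of_lt hABpos)

end Corr

section Apps
variable (P : 𝒳 → 𝒴 → 𝒮 → ℝ) (Q : 𝒳 → 𝒮 → 𝒴 → ℝ)

lemma app_fixed_s (hP0 : ∀ x y s, 0 ≤ P x y s)
    (hP1 : ∑ x, ∑ y, ∑ s, P x y s = 1) (hQ : IsRule Q)
    {ε : ℝ} (hfair : maxCorr P Q ≤ ε) (hε : 0 ≤ ε) (s₀ : 𝒮) :
    ∑ yh, |jointYhatS P Q yh s₀ - margS P s₀ * margYhat P Q yh|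
      ≤ ε * Real.sqrt (margS P s₀ - margS P s₀ ^ 2) := by
  classical
  set w₀ := margS P s₀ with hw₀
  set Δ : 𝒴 → ℝ := fun yh => jointYhatS P Q yh s₀ - w₀ * margYhat P Q yh with hΔ
  set f₀ : 𝒴 → ℝ := fun yh => if 0 ≤ Δ yh then 1 else -1 with hf₀
  set μ : ℝ := ∑ yh, margYhat P Q yh * f₀ yh with hμ
  set f : 𝒴 → ℝ := fun yh => f₀ yh - μ with hf
  set g : 𝒮 → ℝ := fun s => (if s = s₀ then (1:ℝ) else 0) - w₀ with hg
  have hmsum := margYhat_sum P Q hP1 hQ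
  have hwsum := margS_sum P hP1
  have hfmean : ∑ yh, margYhat P Q yh * f yh = 0 := by
    have : ∀ yh, margYhat P Q yh * f yh
        = margYhat P Q yh * f₀ yh - μ * margYhat P Q yh := fun yh => by
      simp only [hf]; ring
    rw [Finset.sum_congr rfl fun yh _ => this yh, Finset.sum_sub_distrib,
      ← Finset.mul_sum, hmsum, mul_one, hμ, sub_self]
  have hgmean : ∑ s, margS P s * g s = 0 := by
    have : ∀ s, margS P s * g s
        = (if s = s₀ then margS P s else 0) - w₀ * margS P s := fun s => by
      simp only [hg]; split <;> ring
    rw [Finset.sum_congr rfl fun s _ => this s, Finset.sum_sub_distrib,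
      Finset.sum_ite_eq' Finset.univ s₀ (fun s => margS P s), ← Finset.mul_sum, hwsum]
    simp [hw₀]
  have key := corr_pair_le P Q hP0 hP1 hQ hfair hε f g hfmean hgmean
  -- identify the LHS
  have hinner : ∀ yh, ∑ s, jointYhatS P Q yh s * f yh * g s = f yh * Δ yh := by
    intro yh
    have : ∀ s, jointYhatS P Q yh s * f yh * g s
        = f yh * ((if s = s₀ then jointYhatS P Q yh s else 0)
            - w₀ * jointYhatS P Q yh s) := fun s => by
      simp only [hg]; split <;> ring
    rw [Finset.sum_congr rfl fun s _ => this s, ← Finset.mul_sum, Finset.sum_sub_distrib,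
      Finset.sum_ite_eq' Finset.univ s₀ (fun s => jointYhatS P Q yh s), ← Finset.mul_sum]
    simp [hΔ, margYhat]
  have hΔsum : ∑ yh, Δ yh = 0 := by
    simp only [hΔ]
    rw [Finset.sum_sub_distrib, joint_sum_yh P Q hQ s₀, ← Finset.mul_sum, hmsum]
    simp [hw₀]
  have hLHS : ∑ yh, ∑ s, jointYhatS P Q yh s * f yh * g s = ∑ yh, |Δ yh| := by
    rw [Finset.sum_congr rfl fun yh _ => hinner yh]
    have : ∀ yh, f yh * Δ yh = f₀ yh * Δ yh - μ * Δ yh := fun yh => by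
      simp only [hf]; ring
    rw [Finset.sum_congr rfl fun yh _ => this yh, Finset.sum_sub_distrib,
      ← Finset.mul_sum, hΔsum, mul_zero, sub_zero]
    refine Finset.sum_congr rfl fun yh _ => ?_
    simp only [hf₀]
    split
    · rw [one_mul, abs_of_nonneg (by assumption)]
    · rw [abs_of_neg (by linarith [not_le.1 (by assumption : ¬ (0:ℝ) ≤ Δ yh)])]; ring
  -- bound the f-variance by 1
  have hfvar : ∑ yh, margYhat P Q yh * f yh ^ 2 ≤ 1 := by
    have expand : ∀ yh, margYhat P Q yh * f yh ^ 2
        = margYhat P Q yh * f₀ yh ^ 2 - 2 * μ * (margYhat P Q yh * f₀ yh)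
          + μ ^ 2 * margYhat P Q yh := fun yh => by
      simp only [hf]; ring
    have hsq : ∀ yh, margYhat P Q yh * f₀ yh ^ 2 = margYhat P Q yh := fun yh => by
      simp only [hf₀]; split <;> norm_num
    rw [Finset.sum_congr rfl fun yh _ => expand yh, Finset.sum_add_distrib,
      Finset.sum_sub_distrib, Finset.sum_congr rfl fun yh _ => hsq yh, hmsum,
      ← Finset.mul_sum, ← Finset.mul_sum, ← hμ, hmsum, mul_one]
    nlinarith [sq_nonneg μ]
  have hgvar : ∑ s, margS P s * g s ^ 2 = w₀ - w₀ ^ 2 := by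
    have expand : ∀ s, margS P s * g s ^ 2
        = (if s = s₀ then margS P s else 0) - 2 * w₀ * (if s = s₀ then margS P s else 0)
          + w₀ ^ 2 * margS P s := fun s => by
      simp only [hg]; split <;> ring
    rw [Finset.sum_congr rfl fun s _ => expand s, Finset.sum_add_distrib,
      Finset.sum_sub_distrib, Finset.sum_ite_eq' Finset.univ s₀ (fun s => margS P s),
      ← Finset.mul_sum, Finset.sum_ite_eq' Finset.univ s₀ (fun s => margS P s),
      ← Finset.mul_sum, hwsum]
    simp [hw₀]
    ring
  rw [hLHS, hgvar] at key
  refine le_trans key ?_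
  have h1 : Real.sqrt (∑ yh, margYhat P Q yh * f yh ^ 2) ≤ 1 := by
    rw [show (1:ℝ) = Real.sqrt 1 by rw [Real.sqrt_one]]
    exact Real.sqrt_le_sqrt hfvar
  have h2 : (0:ℝ) ≤ Real.sqrt (w₀ - w₀ ^ 2) := Real.sqrt_nonneg _
  calc ε * Real.sqrt (∑ yh, margYhat P Q yh * f yh ^ 2) * Real.sqrt (w₀ - w₀ ^ 2)
      ≤ ε * 1 * Real.sqrt (w₀ - w₀ ^ 2) := by
        exact mul_le_mul_of_nonneg_right (mul_le_mul_of_nonneg_left h1 hε) h2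
    _ = ε * Real.sqrt (w₀ - w₀ ^ 2) := by ring
end Apps

section Apps2
variable (P : 𝒳 → 𝒴 → 𝒮 → ℝ) (Q : 𝒳 → 𝒮 → 𝒴 → ℝ)

lemma app_fixed_y (hP0 : ∀ x y s, 0 ≤ P x y s)
    (hP1 : ∑ x, ∑ y, ∑ s, P x y s = 1) (hQ : IsRule Q)
    {ε : ℝ} (hfair : maxCorr P Q ≤ ε) (hε : 0 ≤ ε) (y₀ : 𝒴) :
    ∑ s, |jointYhatS P Q y₀ s - margS P s * margYhat P Q y₀|
      ≤ ε * Real.sqrt (margYhat P Q y₀ - margYhat P Q y₀ ^ 2) := by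
  classical
  set m₀ := margYhat P Q y₀ with hm₀
  set Δ : 𝒮 → ℝ := fun s => jointYhatS P Q y₀ s - margS P s * m₀ with hΔ
  set g₀ : 𝒮 → ℝ := fun s => if 0 ≤ Δ s then 1 else -1 with hg₀
  set ν : ℝ := ∑ s, margS P s * g₀ s with hν
  set g : 𝒮 → ℝ := fun s => g₀ s - ν with hgdef
  set f : 𝒴 → ℝ := fun yh => (if yh = y₀ then (1:ℝ) else 0) - m₀ with hfdef
  have hmsum := margYhat_sum P Q hP1 hQ
  have hwsum := margS_sum P hP1
  have hgmean : ∑ s, margS P s * g s = 0 := by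
    have : ∀ s, margS P s * g s
        = margS P s * g₀ s - ν * margS P s := fun s => by
      simp only [hgdef]; ring
    rw [Finset.sum_congr rfl fun s _ => this s, Finset.sum_sub_distrib,
      ← Finset.mul_sum, hwsum, mul_one, hν, sub_self]
  have hfmean : ∑ yh, margYhat P Q yh * f yh = 0 := by
    have : ∀ yh, margYhat P Q yh * f yh
        = (if yh = y₀ then margYhat P Q yh else 0) - m₀ * margYhat P Q yh := fun yh => by
      simp only [hfdef]; split <;> ring
    rw [Finset.sum_congr rfl fun yh _ => this yh, Finset.sum_sub_distrib,
      Finset.sum_ite_eq' Finset.univ y₀ (fun yh => margYhat P Q yh),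
      ← Finset.mul_sum, hmsum]
    simp [hm₀]
  have key := corr_pair_le P Q hP0 hP1 hQ hfair hε f g hfmean hgmean
  have hswap : ∑ yh, ∑ s, jointYhatS P Q yh s * f yh * g s
      = ∑ s, ∑ yh, jointYhatS P Q yh s * f yh * g s := Finset.sum_comm
  have hinner : ∀ s, ∑ yh, jointYhatS P Q yh s * f yh * g s = Δ s * g s := by
    intro s
    have : ∀ yh, jointYhatS P Q yh s * f yh * g s
        = g s * ((if yh = y₀ then jointYhatS P Q yh s else 0)
            - m₀ * jointYhatS P Q yh s) := fun yh => by
      simp only [hfdef]; split <;> ring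
    rw [Finset.sum_congr rfl fun yh _ => this yh, ← Finset.mul_sum, Finset.sum_sub_distrib,
      Finset.sum_ite_eq' Finset.univ y₀ (fun yh => jointYhatS P Q yh s), ← Finset.mul_sum,
      joint_sum_yh P Q hQ s]
    simp only [Finset.mem_univ, if_pos, hΔ]
    ring
  have hΔsum : ∑ s, Δ s = 0 := by
    simp only [hΔ]
    rw [Finset.sum_sub_distrib, ← Finset.sum_mul, hwsum]
    simp [hm₀, margYhat]
  have hLHS : ∑ yh, ∑ s, jointYhatS P Q yh s * f yh * g s = ∑ s, |Δ s| := by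
    rw [hswap, Finset.sum_congr rfl fun s _ => hinner s]
    have : ∀ s, Δ s * g s = g₀ s * Δ s - ν * Δ s := fun s => by
      simp only [hgdef]; ring
    rw [Finset.sum_congr rfl fun s _ => this s, Finset.sum_sub_distrib,
      ← Finset.mul_sum, hΔsum, mul_zero, sub_zero]
    refine Finset.sum_congr rfl fun s _ => ?_
    simp only [hg₀]
    split
    · rw [one_mul, abs_of_nonneg (by assumption)]
    · rw [abs_of_neg (by linarith [not_le.1 (by assumption : ¬ (0:ℝ) ≤ Δ s)])]; ring
  have hgvar : ∑ s, margS P s * g s ^ 2 ≤ 1 := by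
    have expand : ∀ s, margS P s * g s ^ 2
        = margS P s * g₀ s ^ 2 - 2 * ν * (margS P s * g₀ s)
          + ν ^ 2 * margS P s := fun s => by
      simp only [hgdef]; ring
    have hsq : ∀ s, margS P s * g₀ s ^ 2 = margS P s := fun s => by
      simp only [hg₀]; split <;> norm_num
    rw [Finset.sum_congr rfl fun s _ => expand s, Finset.sum_add_distrib,
      Finset.sum_sub_distrib, Finset.sum_congr rfl fun s _ => hsq s, hwsum,
      ← Finset.mul_sum, ← Finset.mul_sum, ← hν, hwsum, mul_one]
    nlinarith [sq_nonneg ν]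
  have hfvar : ∑ yh, margYhat P Q yh * f yh ^ 2 = m₀ - m₀ ^ 2 := by
    have expand : ∀ yh, margYhat P Q yh * f yh ^ 2
        = (if yh = y₀ then margYhat P Q yh else 0)
          - 2 * m₀ * (if yh = y₀ then margYhat P Q yh else 0)
          + m₀ ^ 2 * margYhat P Q yh := fun yh => by
      simp only [hfdef]; split <;> ring
    rw [Finset.sum_congr rfl fun yh _ => expand yh, Finset.sum_add_distrib,
      Finset.sum_sub_distrib, Finset.sum_ite_eq' Finset.univ y₀ (fun yh => margYhat P Q yh),
      ← Finset.mul_sum, Finset.sum_ite_eq' Finset.univ y₀ (fun yh => margYhat P Q yh),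
      ← Finset.mul_sum, hmsum]
    simp [hm₀]
    ring
  rw [hLHS, hfvar] at key
  refine le_trans key ?_
  have h1 : Real.sqrt (∑ s, margS P s * g s ^ 2) ≤ 1 := by
    rw [show (1:ℝ) = Real.sqrt 1 by rw [Real.sqrt_one]]
    exact Real.sqrt_le_sqrt hgvar
  have h2 : (0:ℝ) ≤ Real.sqrt (m₀ - m₀ ^ 2) := Real.sqrt_nonneg _
  calc ε * Real.sqrt (m₀ - m₀ ^ 2) * Real.sqrt (∑ s, margS P s * g s ^ 2)
      ≤ ε * Real.sqrt (m₀ - m₀ ^ 2) * 1 :=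
        mul_le_mul_of_nonneg_left h1 (mul_nonneg hε h2)
    _ = ε * Real.sqrt (m₀ - m₀ ^ 2) := by ring
end Apps2

lemma sqrt_sum_bound {ι : Type*} [Fintype ι] (w : ι → ℝ) (h0 : ∀ i, 0 ≤ w i)
    (h1 : ∑ i, w i = 1) :
    ∑ i, Real.sqrt (w i - w i ^ 2) ≤ Real.sqrt ((Fintype.card ι : ℝ) - 1) := by
  have hwle : ∀ i, w i ≤ 1 := fun i => by
    rw [← h1]
    exact Finset.single_le_sum (fun j _ => h0 j) (Finset.mem_univ i)
  have hnn : ∀ i, 0 ≤ w i - w i ^ 2 := fun i => by nlinarith [h0 i, hwle i]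
  have cs := sq_sum_le_card_mul_sum_sq
    (s := (Finset.univ : Finset ι)) (f := fun i => Real.sqrt (w i - w i ^ 2))
  have hsq : ∑ i, (Real.sqrt (w i - w i ^ 2)) ^ 2 = 1 - ∑ i, w i ^ 2 := by
    rw [Finset.sum_congr rfl fun i _ => Real.sq_sqrt (hnn i), Finset.sum_sub_distrib, h1]
  have cs2 := sq_sum_le_card_mul_sum_sq
    (s := (Finset.univ : Finset ι)) (f := w)
  rw [h1] at cs2
  rw [hsq, Finset.card_univ] at cs
  rw [Finset.card_univ] at cs2
  have hbound : (∑ i, Real.sqrt (w i - w i ^ 2)) ^ 2 ≤ (Fintype.card ι : ℝ) - 1 := by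
    nlinarith [cs, cs2]
  calc ∑ i, Real.sqrt (w i - w i ^ 2)
      = Real.sqrt ((∑ i, Real.sqrt (w i - w i ^ 2)) ^ 2) :=
        (Real.sqrt_sq (Finset.sum_nonneg fun i _ => Real.sqrt_nonneg _)).symm
    _ ≤ Real.sqrt ((Fintype.card ι : ℝ) - 1) := Real.sqrt_le_sqrt hbound

section RiskLemmas
variable (P : 𝒳 → 𝒴 → 𝒮 → ℝ) (Q : 𝒳 → 𝒮 → 𝒴 → ℝ)

lemma risk_eq (hP1 : ∑ x, ∑ y, ∑ s, P x y s = 1) (hQ : IsRule Q) :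
    risk P Q = 1 - ∑ s, ∑ y, ∑ x, P x y s * Q x s y := by
  classical
  unfold risk
  have step : ∀ x y s, ∑ yh, P x y s * Q x s yh * (if yh = y then (0:ℝ) else 1)
      = P x y s - P x y s * Q x s y := by
    intro x y s
    have : ∀ yh, P x y s * Q x s yh * (if yh = y then (0:ℝ) else 1)
        = P x y s * Q x s yh - (if yh = y then P x y s * Q x s yh else 0) := by
      intro yh; split <;> ring
    rw [Finset.sum_congr rfl fun yh _ => this yh, Finset.sum_sub_distrib,
      ← Finset.mul_sum, hQ.2 x s, mul_one,
      Finset.sum_ite_eq' Finset.univ y (fun yh => P x y s * Q x s yh)]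
    simp
  rw [Finset.sum_congr rfl fun x _ => Finset.sum_congr rfl fun y _ =>
    Finset.sum_congr rfl fun s _ => step x y s]
  have split : ∑ x, ∑ y, ∑ s, (P x y s - P x y s * Q x s y)
      = (∑ x, ∑ y, ∑ s, P x y s) - ∑ x, ∑ y, ∑ s, P x y s * Q x s y := by
    rw [← Finset.sum_sub_distrib]
    refine Finset.sum_congr rfl fun x _ => ?_
    rw [← Finset.sum_sub_distrib]
    refine Finset.sum_congr rfl fun y _ => ?_
    rw [← Finset.sum_sub_distrib]
  rw [split, hP1]
  have swap3 : ∑ x, ∑ y, ∑ s, P x y s * Q x s y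
      = ∑ s, ∑ y, ∑ x, P x y s * Q x s y :=
    calc ∑ x, ∑ y, ∑ s, P x y s * Q x s y
        = ∑ x, ∑ s, ∑ y, P x y s * Q x s y :=
          Finset.sum_congr rfl fun x _ => Finset.sum_comm
      _ = ∑ s, ∑ x, ∑ y, P x y s * Q x s y := Finset.sum_comm
      _ = ∑ s, ∑ y, ∑ x, P x y s * Q x s y :=
          Finset.sum_congr rfl fun s _ => Finset.sum_comm
  rw [swap3]

lemma risk_ge (hP0 : ∀ x y s, 0 ≤ P x y s) (hP1 : ∑ x, ∑ y, ∑ s, P x y s = 1)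
    (hS : ∀ s, 0 < margS P s) (hQ : IsRule Q) :
    ∑ s, margS P s * TV (condYhatS P Q s) (condYS P s) ≤ risk P Q := by
  classical
  rw [risk_eq P Q hP1 hQ]
  have hQle1 : ∀ x s y, Q x s y ≤ 1 := fun x s y => by
    rw [← hQ.2 x s]
    exact Finset.single_le_sum (fun y' _ => hQ.1 x s y') (Finset.mem_univ y)
  have hG : ∀ s y, ∑ x, P x y s * Q x s y
      ≤ min (jointYhatS P Q y s) (∑ x, P x y s) := by
    intro s y
    refine le_min ?_ ?_
    · unfold jointYhatS
      refine Finset.sum_le_sum fun x _ => ?_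
      exact Finset.single_le_sum (fun y' _ => mul_nonneg (hP0 x y' s) (hQ.1 x s y))
        (Finset.mem_univ y)
    · refine Finset.sum_le_sum fun x _ => ?_
      calc P x y s * Q x s y ≤ P x y s * 1 :=
            mul_le_mul_of_nonneg_left (hQle1 x s y) (hP0 x y s)
        _ = P x y s := mul_one _
  have hmin : ∀ s y, min (jointYhatS P Q y s) (∑ x, P x y s)
      = margS P s * min (condYhatS P Q s y) (condYS P s y) := by
    intro s y
    have hw := hS s
    unfold condYhatS condYS
    rw [mul_min_of_nonneg _ _ (le_of_lt hw), mul_div_cancel₀ _ (ne_of_gt hw),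
      mul_div_cancel₀ _ (ne_of_gt hw)]
  have hTVs : ∀ s, TV (condYhatS P Q s) (condYS P s)
      = 1 - ∑ y, min (condYhatS P Q s y) (condYS P s y) := by
    intro s
    refine TV_eq_one_sub _ _ ?_ ?_
    · unfold condYhatS
      rw [← Finset.sum_div, joint_sum_yh P Q hQ s, div_self (ne_of_gt (hS s))]
    · unfold condYS
      rw [← Finset.sum_div]
      have : ∑ y, ∑ x, P x y s = margS P s := by
        rw [Finset.sum_comm]; rfl
      rw [this, div_self (ne_of_gt (hS s))]
  have key : ∀ s, margS P s * TV (condYhatS P Q s) (condYS P s)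
      ≤ margS P s - ∑ y, ∑ x, P x y s * Q x s y := by
    intro s
    rw [hTVs s, mul_sub, mul_one]
    have h1 : ∑ y, ∑ x, P x y s * Q x s y
        ≤ ∑ y, margS P s * min (condYhatS P Q s y) (condYS P s y) := by
      refine Finset.sum_le_sum fun y _ => ?_
      rw [← hmin s y]
      exact hG s y
    rw [← Finset.mul_sum] at h1
    linarith
  have total := Finset.sum_le_sum fun s (_ : s ∈ Finset.univ) => key s
  rw [Finset.sum_sub_distrib, margS_sum P hP1] at total
  linarith

lemma maxCorr_of_indep (q : 𝒴 → ℝ)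
    (hfact : ∀ yh s, jointYhatS P Q yh s = margS P s * q yh)
    {ε : ℝ} (hε : 0 ≤ ε) : maxCorr P Q ≤ ε := by
  unfold maxCorr
  refine Real.sSup_le ?_ hε
  rintro c ⟨f, g, h1, h2, h3, h4, rfl⟩
  have : ∀ yh : 𝒴, ∑ s, jointYhatS P Q yh s * f yh * g s = 0 := by
    intro yh
    have : ∀ s, jointYhatS P Q yh s * f yh * g s
        = (q yh * f yh) * (margS P s * g s) := fun s => by rw [hfact]; ring
    rw [Finset.sum_congr rfl fun s _ => this s, ← Finset.mul_sum, h2, mul_zero]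
  rw [Finset.sum_congr rfl fun yh _ => this yh, Finset.sum_const, smul_zero]
  exact hε
end RiskLemmas

section CondYS
variable (P : 𝒳 → 𝒴 → 𝒮 → ℝ)

lemma condYS_nonneg (hP0 : ∀ x y s, 0 ≤ P x y s) (hS : ∀ s, 0 < margS P s) (s : 𝒮) (y : 𝒴) :
    0 ≤ condYS P s y :=
  div_nonneg (Finset.sum_nonneg fun x _ => hP0 x y s) (le_of_lt (hS s))

lemma condYS_sum (hS : ∀ s, 0 < margS P s) (s : 𝒮) : ∑ y, condYS P s y = 1 := by
  unfold condYS
  rw [← Finset.sum_div]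
  have : ∑ y, ∑ x, P x y s = margS P s := by rw [Finset.sum_comm]; rfl
  rw [this, div_self (ne_of_gt (hS s))]
end CondYS

lemma exists_fair_rule (P : 𝒳 → 𝒴 → 𝒮 → ℝ)
    (hP0 : ∀ x y s, 0 ≤ P x y s) (hP1 : ∑ x, ∑ y, ∑ s, P x y s = 1)
    (hS : ∀ s, 0 < margS P s)
    (h : 𝒳 → 𝒮 → 𝒴) (hdet : ∀ x y s, y ≠ h x s → P x y s = 0) (smax : 𝒮) :
    ∃ Q' : 𝒳 → 𝒮 → 𝒴 → ℝ, IsRule Q' ∧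
      (∀ yh s, jointYhatS P Q' yh s = margS P s * condYS P smax yh) ∧
      risk P Q' ≤ ∑ s, margS P s * TV (condYS P s) (condYS P smax) := by
  classical
  set q : 𝒴 → ℝ := condYS P smax with hqdef
  set qs : 𝒮 → 𝒴 → ℝ := fun s => condYS P s with hqsdef
  set T : 𝒮 → ℝ := fun s => 1 - ∑ y, min (qs s y) (q y) with hTdef
  set rr : 𝒮 → 𝒴 → ℝ := fun s yh =>
    if T s = 0 then q yh else (q yh - min (qs s yh) (q yh)) / T s with hrrdef
  set A : 𝒮 → 𝒴 → ℝ := fun s y =>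
    if qs s y = 0 then 1 else min (qs s y) (q y) / qs s y with hAdef
  set Q' : 𝒳 → 𝒮 → 𝒴 → ℝ := fun x s yh =>
    A s (h x s) * (if yh = h x s then (1:ℝ) else 0) + (1 - A s (h x s)) * rr s yh
    with hQ'def
  have hq0 : ∀ y, 0 ≤ q y := condYS_nonneg P hP0 hS smax
  have hqs0 : ∀ s y, 0 ≤ qs s y := fun s => condYS_nonneg P hP0 hS s
  have hqsum : ∑ y, q y = 1 := condYS_sum P hS smax
  have hqssum : ∀ s, ∑ y, qs s y = 1 := fun s => condYS_sum P hS s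
  have hmin0 : ∀ s y, 0 ≤ min (qs s y) (q y) := fun s y => le_min (hqs0 s y) (hq0 y)
  have hT0 : ∀ s, 0 ≤ T s := by
    intro s
    have : ∑ y, min (qs s y) (q y) ≤ ∑ y, qs s y :=
      Finset.sum_le_sum fun y _ => min_le_left _ _
    rw [hqssum s] at this
    simp only [hTdef]
    linarith
  have hA0 : ∀ s y, 0 ≤ A s y := by
    intro s y
    simp only [hAdef]
    split
    · norm_num
    · exact div_nonneg (hmin0 s y) (hqs0 s y)
  have hA1 : ∀ s y, A s y ≤ 1 := by
    intro s y
    simp only [hAdef]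
    split
    · exact le_refl 1
    · exact div_le_one_of_le₀ (min_le_left _ _) (hqs0 s y)
  have hr0 : ∀ s yh, 0 ≤ rr s yh := by
    intro s yh
    simp only [hrrdef]
    split
    · exact hq0 yh
    · exact div_nonneg (by linarith [min_le_right (qs s yh) (q yh)]) (hT0 s)
  have hrsum : ∀ s, ∑ yh, rr s yh = 1 := by
    intro s
    by_cases hT : T s = 0
    · simp only [hrrdef, if_pos hT]
      exact hqsum
    · simp only [hrrdef, if_neg hT]
      rw [← Finset.sum_div, Finset.sum_sub_distrib, hqsum]
      have : (1 : ℝ) - ∑ y, min (qs s y) (q y) = T s := rfl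
      rw [this, div_self hT]
  have hqsA : ∀ s y, qs s y * A s y = min (qs s y) (q y) := by
    intro s y
    simp only [hAdef]
    split
    · rename_i hz
      rw [hz, zero_mul]
      exact (min_eq_left (hq0 y)).symm
    · rename_i hz
      rw [mul_comm, div_mul_cancel₀ _ hz]
  have hTzero : ∀ s, T s = 0 → ∀ y, min (qs s y) (q y) = q y := by
    intro s hT y
    have hsum : ∑ y, (q y - min (qs s y) (q y)) = 0 := by
      rw [Finset.sum_sub_distrib, hqsum]
      have : (1:ℝ) - ∑ y, min (qs s y) (q y) = T s := rfl
      rw [this, hT]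
    have := (Finset.sum_eq_zero_iff_of_nonneg (fun y _ => by
      have := min_le_right (qs s y) (q y); linarith)).1 hsum y (Finset.mem_univ y)
    linarith [this]
  have hrule : IsRule Q' := by
    constructor
    · intro x s yh
      simp only [hQ'def]
      refine add_nonneg (mul_nonneg (hA0 s (h x s)) ?_)
        (mul_nonneg (by linarith [hA1 s (h x s)]) (hr0 s yh))
      split <;> norm_num
    · intro x s
      simp only [hQ'def]
      rw [Finset.sum_add_distrib, ← Finset.mul_sum, ← Finset.mul_sum, hrsum s]
      have : ∑ yh, (if yh = h x s then (1:ℝ) else 0) = 1 := by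
        rw [Finset.sum_ite_eq' Finset.univ (h x s) (fun _ => (1:ℝ))]
        simp
      rw [this]
      ring
  have hJYq : ∀ y s, ∑ x, P x y s = margS P s * qs s y := by
    intro y s
    simp only [hqsdef]
    unfold condYS
    rw [mul_div_cancel₀ _ (ne_of_gt (hS s))]
  have hfact : ∀ yh s, jointYhatS P Q' yh s = margS P s * q yh := by
    intro yh s
    unfold jointYhatS
    have step : ∀ x y, P x y s * Q' x s yh
        = P x y s * (A s y * (if yh = y then (1:ℝ) else 0) + (1 - A s y) * rr s yh) := by
      intro x y
      by_cases hy : y = h x s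
      · subst hy; rfl
      · rw [hdet x y s hy, zero_mul, zero_mul]
    rw [Finset.sum_congr rfl fun x _ => Finset.sum_congr rfl fun y _ => step x y,
      Finset.sum_comm]
    have factor : ∀ y, ∑ x, P x y s *
        (A s y * (if yh = y then (1:ℝ) else 0) + (1 - A s y) * rr s yh)
        = (margS P s * qs s y) * (A s y * (if yh = y then (1:ℝ) else 0)
            + (1 - A s y) * rr s yh) := by
      intro y
      rw [← Finset.sum_mul, hJYq y s]
    rw [Finset.sum_congr rfl fun y _ => factor y]
    have expand : ∀ y, (margS P s * qs s y) * (A s y * (if yh = y then (1:ℝ) else 0)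
        + (1 - A s y) * rr s yh)
        = (if yh = y then margS P s * (qs s y * A s y) else 0)
          + (margS P s * (qs s y - qs s y * A s y)) * rr s yh := by
      intro y
      split <;> ring
    rw [Finset.sum_congr rfl fun y _ => expand y, Finset.sum_add_distrib,
      Finset.sum_ite_eq Finset.univ yh (fun y => margS P s * (qs s y * A s y)),
      ← Finset.sum_mul]
    simp only [Finset.mem_univ, if_pos]
    have e1 : ∑ y, margS P s * (qs s y - qs s y * A s y) = margS P s * T s := by
      rw [← Finset.mul_sum]
      congr 1
      rw [Finset.sum_congr rfl fun y _ => by rw [hqsA s y], Finset.sum_sub_distrib, hqssum s]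
    rw [e1, hqsA s yh]
    by_cases hT : T s = 0
    · rw [hT, mul_zero, zero_mul, add_zero, hTzero s hT yh]
    · have : rr s yh = (q yh - min (qs s yh) (q yh)) / T s := by
        simp only [hrrdef, if_neg hT]
      rw [this]
      field_simp
      ring
  refine ⟨Q', hrule, hfact, ?_⟩
  rw [risk_eq P Q' hP1 hrule]
  have hTV : ∀ s, TV (condYS P s) (condYS P smax) = T s := by
    intro s
    rw [TV_eq_one_sub _ _ (hqssum s) hqsum]
  have hlow : ∀ s y, (margS P s) * min (qs s y) (q y) ≤ ∑ x, P x y s * Q' x s y := by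
    intro s y
    have perx : ∀ x, P x y s * A s y ≤ P x y s * Q' x s y := by
      intro x
      by_cases hy : y = h x s
      · have : Q' x s y = A s (h x s) * 1 + (1 - A s (h x s)) * rr s y := by
          simp only [hQ'def, if_pos hy]
        rw [this, ← hy]
        have h1 : 0 ≤ (1 - A s y) * rr s y :=
          mul_nonneg (by linarith [hA1 s y]) (hr0 s y)
        have h2 : A s y ≤ A s y * 1 + (1 - A s y) * rr s y := by linarith
        exact mul_le_mul_of_nonneg_left h2 (hP0 x y s)
      · rw [hdet x y s hy, zero_mul, zero_mul]
    calc (margS P s) * min (qs s y) (q y) = (margS P s * qs s y) * A s y := by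
          rw [mul_assoc, hqsA s y]
      _ = (∑ x, P x y s) * A s y := by rw [hJYq y s]
      _ = ∑ x, P x y s * A s y := by rw [Finset.sum_mul]
      _ ≤ ∑ x, P x y s * Q' x s y := Finset.sum_le_sum fun x _ => perx x
  have hsum_low : ∑ s, margS P s * (1 - T s) ≤ ∑ s, ∑ y, ∑ x, P x y s * Q' x s y := by
    refine Finset.sum_le_sum fun s _ => ?_
    have : margS P s * (1 - T s) = ∑ y, margS P s * min (qs s y) (q y) := by
      rw [← Finset.mul_sum]
      congr 1
      simp only [hTdef]
      ring
    rw [this]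
    exact Finset.sum_le_sum fun y _ => hlow s y
  have hms : ∑ s, margS P s * (1 - T s) = 1 - ∑ s, margS P s * T s := by
    have : ∀ s, margS P s * (1 - T s) = margS P s - margS P s * T s := fun s => by ring
    rw [Finset.sum_congr rfl fun s _ => this s, Finset.sum_sub_distrib, margS_sum P hP1]
  have goalrw : ∑ s, margS P s * TV (condYS P s) (condYS P smax)
      = ∑ s, margS P s * T s :=
    Finset.sum_congr rfl fun s _ => by rw [hTV s]
  rw [goalrw]
  rw [hms] at hsum_low
  linarith


set_option maxHeartbeats 2000000 in
/-- **Theorem 2 (maximal correlation case).** If `Y = h(X, S)` is deterministic,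
`P_S(s_max) = 1/2 + δ` with `δ > 0`, `r = min{|𝒮|, |𝒴|} - 1`, `u(t) = max{t, √t}`, and `Q`
is an optimal randomized prediction rule among those with `ρ_m(Ŷ, S) ≤ ε`, then
`E_{s∼P_S}[TV(P_{Ŷ|S=s}, P_{Y|S=s_max})] ≤ (1/2 + 1/(4δ)) u(rε)`. -/
theorem maxcorr_fair_optimal_inductive_bias
    (P : 𝒳 → 𝒴 → 𝒮 → ℝ)
    (hP0 : ∀ x y s, 0 ≤ P x y s)
    (hP1 : ∑ x, ∑ y, ∑ s, P x y s = 1)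
    (hS : ∀ s, 0 < margS P s)
    (h : 𝒳 → 𝒮 → 𝒴) (hdet : ∀ x y s, y ≠ h x s → P x y s = 0)
    (smax : 𝒮) (δ : ℝ) (hδ : 0 < δ) (hsmax : margS P smax = 1 / 2 + δ)
    (ε : ℝ)
    (Q : 𝒳 → 𝒮 → 𝒴 → ℝ) (hQ : IsRule Q)
    (hfair : maxCorr P Q ≤ ε)
    (hopt : ∀ Q' : 𝒳 → 𝒮 → 𝒴 → ℝ, IsRule Q' → maxCorr P Q' ≤ ε → risk P Q ≤ risk P Q') :
    ∑ s, margS P s * TV (condYhatS P Q s) (condYS P smax)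
      ≤ (1 / 2 + 1 / (4 * δ)) *
        max (((min (Fintype.card 𝒮) (Fintype.card 𝒴) : ℝ) - 1) * ε)
          (Real.sqrt (((min (Fintype.card 𝒮) (Fintype.card 𝒴) : ℝ) - 1) * ε)) := by
  classical
  have hε0 : 0 ≤ ε := le_trans (maxCorr_nonneg P Q hP0 hP1 hQ) hfair
  have hY1 : 1 ≤ Fintype.card 𝒴 := by
    rcases Nat.eq_zero_or_pos (Fintype.card 𝒴) with h0 | h1
    · exfalso
      haveI := Fintype.card_eq_zero_iff.mp h0
      simp at hP1
    · exact h1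
  have hS1 : 1 ≤ Fintype.card 𝒮 := by
    rcases Nat.eq_zero_or_pos (Fintype.card 𝒮) with h0 | h1
    · exfalso
      haveI := Fintype.card_eq_zero_iff.mp h0
      simp at hP1
    · exact h1
  set R : ℝ := (min (Fintype.card 𝒮) (Fintype.card 𝒴) : ℝ) - 1 with hRdef
  set u : ℝ := max (R * ε) (Real.sqrt (R * ε)) with hudef
  -- Step 1: bound D := total deviation of joint from product
  set D : ℝ := ∑ s, ∑ yh, |jointYhatS P Q yh s - margS P s * margYhat P Q yh| with hDdef
  have hD1 : D ≤ ε * Real.sqrt ((Fintype.card 𝒮 : ℝ) - 1) := by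
    calc D ≤ ∑ s, ε * Real.sqrt (margS P s - margS P s ^ 2) :=
          Finset.sum_le_sum fun s _ => app_fixed_s P Q hP0 hP1 hQ hfair hε0 s
      _ = ε * ∑ s, Real.sqrt (margS P s - margS P s ^ 2) := by rw [← Finset.mul_sum]
      _ ≤ ε * Real.sqrt ((Fintype.card 𝒮 : ℝ) - 1) :=
          mul_le_mul_of_nonneg_left
            (sqrt_sum_bound (margS P) (margS_nonneg P hP0) (margS_sum P hP1)) hε0
  have hD2 : D ≤ ε * Real.sqrt ((Fintype.card 𝒴 : ℝ) - 1) := by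
    have hswap : D = ∑ yh, ∑ s, |jointYhatS P Q yh s - margS P s * margYhat P Q yh| :=
      Finset.sum_comm
    calc D = ∑ yh, ∑ s, |jointYhatS P Q yh s - margS P s * margYhat P Q yh| := hswap
      _ ≤ ∑ yh, ε * Real.sqrt (margYhat P Q yh - margYhat P Q yh ^ 2) :=
          Finset.sum_le_sum fun yh _ => app_fixed_y P Q hP0 hP1 hQ hfair hε0 yh
      _ = ε * ∑ yh, Real.sqrt (margYhat P Q yh - margYhat P Q yh ^ 2) := by
          rw [← Finset.mul_sum]
      _ ≤ ε * Real.sqrt ((Fintype.card 𝒴 : ℝ) - 1) :=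
          mul_le_mul_of_nonneg_left
            (sqrt_sum_bound (margYhat P Q) (margYhat_nonneg P Q hP0 hQ)
              (margYhat_sum P Q hP1 hQ)) hε0
  have hDR : D ≤ ε * Real.sqrt R := by
    rcases le_total (Fintype.card 𝒮) (Fintype.card 𝒴) with hc | hc
    · have : R = (Fintype.card 𝒮 : ℝ) - 1 := by
        rw [hRdef, min_eq_left (by exact_mod_cast hc)]
      rw [this]; exact hD1
    · have : R = (Fintype.card 𝒴 : ℝ) - 1 := by
        rw [hRdef, min_eq_right (by exact_mod_cast hc)]
      rw [this]; exact hD2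
  have hR0 : 0 ≤ R := by
    rw [hRdef]
    have : (1:ℝ) ≤ min (Fintype.card 𝒮 : ℝ) (Fintype.card 𝒴 : ℝ) :=
      le_min (by exact_mod_cast hS1) (by exact_mod_cast hY1)
    linarith
  have hu0 : 0 ≤ u := le_trans (Real.sqrt_nonneg _) (le_max_right _ _)
  have hDu : D ≤ u := by
    refine le_trans hDR ?_
    have hcase : R = 0 ∨ 1 ≤ R := by
      have hm : (min (Fintype.card 𝒮 : ℝ) (Fintype.card 𝒴 : ℝ))
          = ((min (Fintype.card 𝒮) (Fintype.card 𝒴) : ℕ) : ℝ) := by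
        rw [Nat.cast_min]
      rcases Nat.lt_or_ge (min (Fintype.card 𝒮) (Fintype.card 𝒴)) 2 with h2 | h2
      · left
        have h1 : min (Fintype.card 𝒮) (Fintype.card 𝒴) = 1 := by
          have := le_min hS1 hY1
          omega
        rw [hRdef, hm, h1]
        norm_num
      · right
        have : (2:ℝ) ≤ ((min (Fintype.card 𝒮) (Fintype.card 𝒴) : ℕ) : ℝ) := by
          exact_mod_cast h2
        rw [hRdef, hm]
        linarith
    rcases hcase with hR | hR
    · rw [hR, Real.sqrt_zero, mul_zero]
      exact hu0
    · rcases le_total ε 1 with he | he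
      · have heq : ε * Real.sqrt R = Real.sqrt (ε ^ 2 * R) := by
          rw [Real.sqrt_mul (sq_nonneg ε), Real.sqrt_sq hε0]
        rw [heq]
        refine le_trans (Real.sqrt_le_sqrt ?_) (le_max_right _ _)
        nlinarith [mul_nonneg (mul_nonneg hε0 hR0) (sub_nonneg.2 he)]
      · have h1 : Real.sqrt R ≤ R := by
          have hRR : R ≤ R ^ 2 := by nlinarith
          calc Real.sqrt R ≤ Real.sqrt (R ^ 2) := Real.sqrt_le_sqrt hRR
            _ = R := Real.sqrt_sq hR0
        calc ε * Real.sqrt R ≤ ε * R := mul_le_mul_of_nonneg_left h1 hε0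
          _ = R * ε := mul_comm _ _
          _ ≤ u := le_max_left _ _
  -- alpha
  set alpha : ℝ := ∑ s, margS P s * TV (condYhatS P Q s) (margYhat P Q) with halphadef
  have halphaD : alpha = (1/2) * D := by
    rw [halphadef, hDdef, Finset.mul_sum]
    refine Finset.sum_congr rfl fun s _ => ?_
    unfold TV
    rw [← mul_assoc, mul_comm (margS P s) (1/2 : ℝ), mul_assoc, Finset.mul_sum]
    congr 1
    refine Finset.sum_congr rfl fun yh _ => ?_
    calc margS P s * |condYhatS P Q s yh - margYhat P Q yh|
        = |margS P s| * |condYhatS P Q s yh - margYhat P Q yh| := by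
          rw [abs_of_pos (hS s)]
      _ = |margS P s * (condYhatS P Q s yh - margYhat P Q yh)| := (abs_mul _ _).symm
      _ = |jointYhatS P Q yh s - margS P s * margYhat P Q yh| := by
          unfold condYhatS
          rw [mul_sub, mul_div_cancel₀ _ (ne_of_gt (hS s))]
  have halpha_le : alpha ≤ (1/2) * u := by rw [halphaD]; linarith
  have halpha0 : 0 ≤ alpha :=
    Finset.sum_nonneg fun s _ => mul_nonneg (margS_nonneg P hP0 s) (TV_nonneg _ _)
  -- comparison rule and risk chain
  obtain ⟨Q', hQ'rule, hQ'fact, hQ'risk⟩ := exists_fair_rule P hP0 hP1 hS h hdet smax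
  have hQ'fair : maxCorr P Q' ≤ ε := maxCorr_of_indep P Q' (condYS P smax) hQ'fact hε0
  have hrisks : risk P Q ≤ risk P Q' := hopt Q' hQ'rule hQ'fair
  have hriskQ : ∑ s, margS P s * TV (condYhatS P Q s) (condYS P s) ≤ risk P Q :=
    risk_ge P Q hP0 hP1 hS hQ
  set beta : ℝ := TV (margYhat P Q) (condYS P smax) with hbetadef
  have hbeta0 : 0 ≤ beta := TV_nonneg _ _
  set R' : ℝ := ∑ s, margS P s * TV (condYS P s) (condYS P smax) with hR'def
  -- step 1 of chain
  have step1 : ∑ s, margS P s * TV (margYhat P Q) (condYS P s) - alpha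
      ≤ ∑ s, margS P s * TV (condYhatS P Q s) (condYS P s) := by
    rw [halphadef, ← Finset.sum_sub_distrib]
    refine Finset.sum_le_sum fun s _ => ?_
    have tri := TV_triangle (margYhat P Q) (condYhatS P Q s) (condYS P s)
    have hsymm : TV (margYhat P Q) (condYhatS P Q s)
        = TV (condYhatS P Q s) (margYhat P Q) := TV_symm _ _
    have key : TV (margYhat P Q) (condYS P s) - TV (condYhatS P Q s) (margYhat P Q)
        ≤ TV (condYhatS P Q s) (condYS P s) := by rw [← hsymm]; linarith
    calc margS P s * TV (margYhat P Q) (condYS P s)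
          - margS P s * TV (condYhatS P Q s) (margYhat P Q)
        = margS P s * (TV (margYhat P Q) (condYS P s)
            - TV (condYhatS P Q s) (margYhat P Q)) := by ring
      _ ≤ margS P s * TV (condYhatS P Q s) (condYS P s) :=
          mul_le_mul_of_nonneg_left key (margS_nonneg P hP0 s)
  -- step 2 of chain
  have step2 : R' + 2 * δ * beta ≤ ∑ s, margS P s * TV (margYhat P Q) (condYS P s) := by
    have hTVself : TV (condYS P smax) (condYS P smax) = 0 := by
      unfold TV
      rw [Finset.sum_congr rfl fun y (_ : y ∈ Finset.univ) =>
        (by rw [sub_self, abs_zero] : |condYS P smax y - condYS P smax y| = (0:ℝ))]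
      simp
    have hsplitF : margS P smax * TV (margYhat P Q) (condYS P smax)
        + ∑ s ∈ Finset.univ.erase smax, margS P s * TV (margYhat P Q) (condYS P s)
        = ∑ s, margS P s * TV (margYhat P Q) (condYS P s) :=
      Finset.add_sum_erase Finset.univ
        (fun s => margS P s * TV (margYhat P Q) (condYS P s)) (Finset.mem_univ smax)
    have hsplitG : margS P smax * TV (condYS P smax) (condYS P smax)
        + ∑ s ∈ Finset.univ.erase smax, margS P s * TV (condYS P s) (condYS P smax)
        = ∑ s, margS P s * TV (condYS P s) (condYS P smax) :=
      Finset.add_sum_erase Finset.univ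
        (fun s => margS P s * TV (condYS P s) (condYS P smax)) (Finset.mem_univ smax)
    have hsplitW : margS P smax + ∑ s ∈ Finset.univ.erase smax, margS P s
        = ∑ s, margS P s :=
      Finset.add_sum_erase Finset.univ (margS P) (Finset.mem_univ smax)
    have hWerase : ∑ s ∈ Finset.univ.erase smax, margS P s = 1 - margS P smax := by
      rw [margS_sum P hP1] at hsplitW
      linarith
    have hterm : ∀ s ∈ Finset.univ.erase smax,
        margS P s * TV (condYS P s) (condYS P smax) - margS P s * beta
          ≤ margS P s * TV (margYhat P Q) (condYS P s) := by
      intro s _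
      have tri := TV_triangle (condYS P s) (margYhat P Q) (condYS P smax)
      have h1 : TV (condYS P s) (margYhat P Q) = TV (margYhat P Q) (condYS P s) :=
        TV_symm _ _
      have key : TV (condYS P s) (condYS P smax) - beta
          ≤ TV (margYhat P Q) (condYS P s) := by
        rw [hbetadef]; rw [h1] at tri; linarith
      calc margS P s * TV (condYS P s) (condYS P smax) - margS P s * beta
          = margS P s * (TV (condYS P s) (condYS P smax) - beta) := by ring
        _ ≤ margS P s * TV (margYhat P Q) (condYS P s) :=
            mul_le_mul_of_nonneg_left key (margS_nonneg P hP0 s)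
    have hsum_erase : (∑ s ∈ Finset.univ.erase smax,
          margS P s * TV (condYS P s) (condYS P smax))
          - (∑ s ∈ Finset.univ.erase smax, margS P s) * beta
        ≤ ∑ s ∈ Finset.univ.erase smax, margS P s * TV (margYhat P Q) (condYS P s) := by
      rw [Finset.sum_mul, ← Finset.sum_sub_distrib]
      exact Finset.sum_le_sum hterm
    rw [hWerase, hsmax] at hsum_erase
    rw [hTVself, mul_zero, zero_add] at hsplitG
    rw [hR'def, ← hsplitG, ← hsplitF, hsmax]
    have hbeta' : TV (margYhat P Q) (condYS P smax) = beta := by rw [hbetadef]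
    rw [hbeta']
    nlinarith [hsum_erase]
  -- combine the chain
  have hchain : R' + 2 * δ * beta - alpha ≤ R' := by
    have c1 : R' + 2 * δ * beta - alpha
        ≤ ∑ s, margS P s * TV (condYhatS P Q s) (condYS P s) := by
      have := step2
      linarith [step1, step2]
    exact le_trans c1 (le_trans hriskQ (le_trans hrisks hQ'risk))
  have hbeta_le : beta ≤ alpha / (2 * δ) := by
    have h2δ : 0 < 2 * δ := by linarith
    rw [le_div_iff₀ h2δ]
    linarith [hchain]
  -- final assembly
  have final : ∑ s, margS P s * TV (condYhatS P Q s) (condYS P smax)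
      ≤ alpha + beta := by
    have tsum : ∑ s, margS P s * TV (condYhatS P Q s) (condYS P smax)
        ≤ ∑ s, (margS P s * TV (condYhatS P Q s) (margYhat P Q) + margS P s * beta) := by
      refine Finset.sum_le_sum fun s _ => ?_
      have tri := TV_triangle (condYhatS P Q s) (margYhat P Q) (condYS P smax)
      calc margS P s * TV (condYhatS P Q s) (condYS P smax)
          ≤ margS P s * (TV (condYhatS P Q s) (margYhat P Q) + beta) := by
            refine mul_le_mul_of_nonneg_left ?_ (margS_nonneg P hP0 s)
            rw [hbetadef]; linarith
        _ = margS P s * TV (condYhatS P Q s) (margYhat P Q) + margS P s * beta := by ring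
    rw [Finset.sum_add_distrib, ← Finset.sum_mul, margS_sum P hP1, one_mul] at tsum
    rw [halphadef]
    exact tsum
  have hδ' : (0:ℝ) < 4 * δ := by linarith
  calc ∑ s, margS P s * TV (condYhatS P Q s) (condYS P smax)
      ≤ alpha + beta := final
    _ ≤ alpha + alpha / (2 * δ) := by linarith
    _ = alpha * (1 + 1 / (2 * δ)) := by field_simp
    _ ≤ ((1/2) * u) * (1 + 1 / (2 * δ)) := by
        refine mul_le_mul_of_nonneg_right halpha_le ?_
        have : 0 < 1 / (2 * δ) := by positivity
        linarith
    _ = (1 / 2 + 1 / (4 * δ)) * u := by field_simp; ring
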